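/- Let Y be a proper geodesic metric space with the Busemann convexity property that for any two geodesic rays β, β' : [0,∞) → Y the function t ↦ d(β(t), β'(t)) is convex. Let o, o' ∈ Y, let ρ be a sublinear function, and let α, α' : [0,∞) → Y be ρ-contracting geodesic rays with α(0) = o, α'(0) = o' and sup_{t≥0} d(α(t), α'(t)) < ∞. Then for every R ≥ 0 there exists R' ≥ 0, depending only on ρ, R and d(o,o'), with the following property: for all geodesic rays β, β' : [0,∞) → Y with β(0) = o, β'(0) = o' and sup_{t≥0} d(β(t), β'(t)) < ∞, if the image of β' intersects the closed κ(ρ,1,0)-neighbourhood of (im α') ∖ B(o', R'), then the image of β intersects the closed κ(ρ,1,0)-neighbourhood of (im α) ∖ B(o, R). (This is the quantitative core of the statement that the topology FG of fellow-traveling geodesics on the Morse boundary of a CAT(0) space is independent of the choice of base point.) -/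

import Mathlib

open Set Metric

/-- A function `ρ : ℝ → ℝ` (thought of as defined on `[0,∞)`) is sublinear:
non-decreasing (on `[0,∞)`), eventually non-negative, and `ρ r / r → 0`. -/
def Sublinear (ρ : ℝ → ℝ) : Prop :=
  MonotoneOn ρ (Ici 0) ∧ (∃ R : ℝ, ∀ r ≥ R, 0 ≤ ρ r) ∧
    Filter.Tendsto (fun r => ρ r / r) Filter.atTop (nhds 0)

/-- Closest-point projection of `y` onto `Z`. -/
def ClosestPoints {Y : Type*} [MetricSpace Y] (Z : Set Y) (y : Y) : Set Y :=
  {z ∈ Z | dist y z = infDist y Z}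

/-- `Z` is a `ρ`-contracting subset. -/
def IsContracting {Y : Type*} [MetricSpace Y] (ρ : ℝ → ℝ) (Z : Set Y) : Prop :=
  ∀ x y : Y, x ∉ Z → y ∉ Z → dist x y < infDist y Z →
    diam (ClosestPoints Z x ∪ ClosestPoints Z y) ≤ ρ (infDist y Z)

/-- `β : [0,∞) → Y` is a `(K,C)`-quasi-geodesic ray. -/
def IsQGRay {Y : Type*} [MetricSpace Y] (K C : ℝ) (β : ℝ → Y) : Prop :=
  ∀ s ≥ (0:ℝ), ∀ t ≥ (0:ℝ),
    (1/K) * |s - t| - C ≤ dist (β s) (β t) ∧ dist (β s) (β t) ≤ K * |s - t| + C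

/-- `α : [0,∞) → Y` is a geodesic ray (isometric embedding of `[0,∞)`). -/
def IsGeodesicRay {Y : Type*} [MetricSpace Y] (α : ℝ → Y) : Prop :=
  ∀ s ≥ (0:ℝ), ∀ t ≥ (0:ℝ), dist (α s) (α t) = |s - t|

/-- κ(ρ,K,C) = max(3K², 3C, 1 + inf{R ≥ 0 : 3K²ρ(r) ≤ r for all r ≥ R}). -/
noncomputable def kappa (ρ : ℝ → ℝ) (K C : ℝ) : ℝ :=
  max (max (3 * K ^ 2) (3 * C))
    (1 + sInf {R : ℝ | 0 ≤ R ∧ ∀ r ≥ R, 3 * K ^ 2 * ρ r ≤ r})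

/-- κ'(ρ,K,C) = (K²+2)(2κ(ρ,K,C)+C). -/
noncomputable def kappa' (ρ : ℝ → ℝ) (K C : ℝ) : ℝ :=
  (K ^ 2 + 2) * (2 * kappa ρ K C + C)

/-- A metric space is geodesic: any two points are joined by an isometric
embedding of a compact interval. -/
def GeodesicSpace (Y : Type*) [MetricSpace Y] : Prop :=
  ∀ x y : Y, ∃ γ : ℝ → Y, γ 0 = x ∧ γ (dist x y) = y ∧
    ∀ s ∈ Icc 0 (dist x y), ∀ t ∈ Icc 0 (dist x y), dist (γ s) (γ t) = |s - t|

/-- Base-point independence of the topology `FG` (quantitative core, Proposition 2.4):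
there is a function `F` assigning to `(ρ, R, d(o,o'))` a radius `R' ≥ 0` such that, in
any proper geodesic Busemann-convex space, for `ρ`-contracting geodesic rays `α, α'`
based at `o, o'` at bounded distance from each other, any pair of asymptotically
equivalent geodesic rays `β, β'` based at `o, o'` such that `β'` meets the closed
`κ(ρ,1,0)`-neighbourhood of `(im α') ∖ B(o', R')` has `β` meeting the closed
`κ(ρ,1,0)`-neighbourhood of `(im α) ∖ B(o, R)`. -/
lemma geodesicRay_image_isClosed {Y : Type*} [MetricSpace Y] {α : ℝ → Y}
    (h : IsGeodesicRay α) : IsClosed (α '' Ici 0) := by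
  rw [← isSeqClosed_iff_isClosed]
  intro u y hu huy
  have hdist : ∀ n, 0 ≤ dist (u n) (α 0) ∧ α (dist (u n) (α 0)) = u n := by
    intro n
    obtain ⟨r, hr, hru⟩ := hu n
    have hr0 : (0:ℝ) ≤ r := hr
    have hr' : dist (u n) (α 0) = r := by
      rw [← hru, h r hr0 0 le_rfl, sub_zero, abs_of_nonneg hr0]
    exact ⟨dist_nonneg, by rw [hr', hru]⟩
  have hs0 : (0:ℝ) ≤ dist y (α 0) := dist_nonneg
  have htend : Filter.Tendsto (fun n => dist (u n) (α 0)) Filter.atTop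
      (nhds (dist y (α 0))) := huy.dist tendsto_const_nhds
  have hlim : Filter.Tendsto u Filter.atTop (nhds (α (dist y (α 0)))) := by
    rw [tendsto_iff_dist_tendsto_zero]
    have heq : ∀ n, dist (u n) (α (dist y (α 0)))
        = |dist (u n) (α 0) - dist y (α 0)| := by
      intro n
      conv_lhs => rw [← (hdist n).2]
      exact h _ (hdist n).1 _ hs0
    simp_rw [heq]
    have h1 := htend.sub_const (dist y (α 0))
    have h2 : Filter.Tendsto (fun n => |dist (u n) (α 0) - dist y (α 0)|)
        Filter.atTop (nhds |dist y (α 0) - dist y (α 0)|) := h1.abs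
    simpa using h2
  have hy : y = α (dist y (α 0)) := tendsto_nhds_unique huy hlim
  exact ⟨dist y (α 0), hs0, hy.symm⟩

lemma convexOn_bounded_le_zero {g : ℝ → ℝ} (hg : ConvexOn ℝ (Ici 0) g)
    {B : ℝ} (hB : ∀ t ≥ (0:ℝ), g t ≤ B) : ∀ t ≥ (0:ℝ), g t ≤ g 0 := by
  intro t ht
  by_contra hcon
  push_neg at hcon
  have ht0 : 0 < t := by
    rcases eq_or_lt_of_le ht with h | h
    · exfalso; rw [← h] at hcon; exact lt_irrefl _ hcon
    · exact h
  have hcpos : 0 < g t - g 0 := by linarith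
  have hBt := hB t ht
  set u := t * (B - g 0 + 1) / (g t - g 0) with hu
  have hup : (0:ℝ) < B - g 0 + 1 := by linarith
  have hut : t ≤ u := by
    rw [hu, le_div_iff₀ hcpos]
    nlinarith
  have hu0 : 0 < u := lt_of_lt_of_le ht0 hut
  have hb0 : 0 < t / u := div_pos ht0 hu0
  have hb1 : t / u ≤ 1 := (div_le_one hu0).mpr hut
  have key := hg.2 (mem_Ici.mpr le_rfl) (mem_Ici.mpr hu0.le)
    (sub_nonneg.mpr hb1) hb0.le (by ring)
  have hval : (1 - t / u) • (0:ℝ) + (t / u) • u = t := by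
    field_simp
    rw [smul_zero, zero_add, smul_eq_mul, div_mul_cancel₀ _ hu0.ne']
  rw [hval] at key
  simp only [smul_eq_mul] at key
  have hgu := hB u hu0.le
  have huval : (t / u) * u = t := by field_simp
  -- g t ≤ (1 - t/u) * g 0 + (t/u) * g u,  g u ≤ B
  -- so  g t - g 0 ≤ (t/u) * (g u - g 0) ≤ (t/u) * (B - g 0)
  -- but t/u = (g t - g 0) / (B - g 0 + 1)
  have htu : t / u = (g t - g 0) / (B - g 0 + 1) := by
    rw [hu]; field_simp
  rw [htu] at key
  have h1 : g t - g 0 ≤ (g t - g 0) / (B - g 0 + 1) * (g u - g 0) := by nlinarith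
  have h2 : (g t - g 0) / (B - g 0 + 1) * (g u - g 0)
      ≤ (g t - g 0) / (B - g 0 + 1) * (B - g 0) := by
    apply mul_le_mul_of_nonneg_left (by linarith) (by positivity)
  have h3 : (g t - g 0) / (B - g 0 + 1) * (B - g 0) < g t - g 0 := by
    rw [div_mul_eq_mul_div, div_lt_iff₀ hup]
    nlinarith
  linarith

theorem FG_basepoint_independence :
    ∃ F : (ℝ → ℝ) → ℝ → ℝ → ℝ,
      ∀ (Y : Type*) [MetricSpace Y] [ProperSpace Y], GeodesicSpace Y →
        (∀ β β' : ℝ → Y, IsGeodesicRay β → IsGeodesicRay β' →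
          ConvexOn ℝ (Ici 0) (fun t => dist (β t) (β' t))) →
        ∀ (o o' : Y) (ρ : ℝ → ℝ), Sublinear ρ →
        ∀ (α α' : ℝ → Y),
          IsGeodesicRay α → IsGeodesicRay α' → α 0 = o → α' 0 = o' →
          IsContracting ρ (α '' Ici 0) → IsContracting ρ (α' '' Ici 0) →
          (∃ B : ℝ, ∀ t ≥ (0:ℝ), dist (α t) (α' t) ≤ B) →
        ∀ R ≥ (0:ℝ),
          0 ≤ F ρ R (dist o o') ∧
          ∀ (β β' : ℝ → Y),
            IsGeodesicRay β → IsGeodesicRay β' → β 0 = o → β' 0 = o' →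
            (∃ B : ℝ, ∀ t ≥ (0:ℝ), dist (β t) (β' t) ≤ B) →
            (∃ t ≥ (0:ℝ),
              infDist (β' t) ((α' '' Ici 0) \ ball o' (F ρ R (dist o o'))) ≤ kappa ρ 1 0) →
            ∃ t ≥ (0:ℝ), infDist (β t) ((α '' Ici 0) \ ball o R) ≤ kappa ρ 1 0 := by
  classical
  refine ⟨fun ρ R d => kappa ρ 1 0 + 2 * (kappa ρ 1 0 + d) * R / 3, ?_⟩
  intro Y _ _ _hgeo hconv o o' ρ _hρ α α' hα hα' hα0 hα'0 _hcA _hcA' hαα' R hR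
  have hκ3 : (3:ℝ) ≤ kappa ρ 1 0 := by
    unfold kappa
    refine le_trans ?_ (le_max_left _ _)
    refine le_trans ?_ (le_max_left _ _)
    norm_num
  set κ := kappa ρ 1 0 with hκdef
  set D := dist o o' with hDdef
  have hD0 : (0:ℝ) ≤ D := dist_nonneg
  set M := κ + D with hMdef
  have hM3 : (3:ℝ) ≤ M := by linarith
  have hMpos : (0:ℝ) < M := by linarith
  have hR'eq : kappa ρ 1 0 + 2 * (kappa ρ 1 0 + dist o o') * R / 3
      = κ + 2 * M * R / 3 := by rw [← hκdef, ← hDdef, ← hMdef]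
  rw [show (fun ρ R d => kappa ρ 1 0 + 2 * (kappa ρ 1 0 + d) * R / 3) ρ R D
      = κ + 2 * M * R / 3 from hR'eq]
  set R' := κ + 2 * M * R / 3 with hR'def
  clear_value κ D M R'
  have hR'0 : (0:ℝ) ≤ R' := by
    have : (0:ℝ) ≤ 2 * M * R / 3 := by positivity
    linarith
  refine ⟨hR'0, ?_⟩
  intro β β' hβ hβ' hβ0 hβ'0 hββ' hhyp
  obtain ⟨t₀, ht₀0, hinf⟩ := hhyp
  -- fellow-travelling bounds from Busemann convexity
  have hααD : ∀ t ≥ (0:ℝ), dist (α t) (α' t) ≤ D := by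
    obtain ⟨B, hB⟩ := hαα'
    have h := convexOn_bounded_le_zero (hconv α α' hα hα') hB
    intro t ht
    have h0 : dist (α 0) (α' 0) = D := by rw [hα0, hα'0, hDdef]
    exact (h t ht).trans h0.le
  have hββD : ∀ t ≥ (0:ℝ), dist (β t) (β' t) ≤ D := by
    obtain ⟨B, hB⟩ := hββ'
    have h := convexOn_bounded_le_zero (hconv β β' hβ hβ') hB
    intro t ht
    have h0 : dist (β 0) (β' 0) = D := by rw [hβ0, hβ'0, hDdef]
    exact (h t ht).trans h0.le
  -- extract the closest point realizing the hypothesis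
  have hSclosed : IsClosed ((α' '' Ici 0) \ ball o' R') :=
    (geodesicRay_image_isClosed hα').sdiff isOpen_ball
  have hSne : ((α' '' Ici 0) \ ball o' R').Nonempty := by
    refine ⟨α' R', ⟨R', hR'0, rfl⟩, ?_⟩
    simp only [mem_ball, not_lt]
    have : dist (α' R') o' = R' := by
      rw [← hα'0, hα' R' hR'0 0 le_rfl, sub_zero, abs_of_nonneg hR'0]
    rw [this]
  obtain ⟨p, hpS, hpeq⟩ := hSclosed.exists_infDist_eq_dist hSne (β' t₀)
  obtain ⟨⟨s₀, hs₀0, hps⟩, hpball⟩ := hpS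
  have hs₀0' : (0:ℝ) ≤ s₀ := hs₀0
  have hdp : dist (β' t₀) p ≤ κ := by rw [← hpeq]; exact hinf
  have hps0 : dist p o' = s₀ := by
    rw [← hps, ← hα'0, hα' s₀ hs₀0' 0 le_rfl, sub_zero, abs_of_nonneg hs₀0']
  have hs₀R' : R' ≤ s₀ := by
    simp only [mem_ball, not_lt, hps0] at hpball
    exact hpball
  have ht₀d : dist (β' t₀) o' = t₀ := by
    rw [← hβ'0, hβ' t₀ ht₀0 0 le_rfl, sub_zero, abs_of_nonneg ht₀0]
  have habs : |t₀ - s₀| ≤ κ := by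
    have h := abs_dist_sub_le (β' t₀) p o'
    rw [ht₀d, hps0] at h
    exact h.trans hdp
  have habs' := abs_le.mp habs
  have ht₀big : R' - κ ≤ t₀ := by linarith
  -- chain bound: dist (α t₀) (β t₀) ≤ 2M
  have hα'seg : dist (α' t₀) (α' s₀) = |t₀ - s₀| := hα' t₀ ht₀0 s₀ hs₀0'
  have hchain : dist (α t₀) (β t₀) ≤ 2 * M := by
    have h1 : dist (α t₀) (β t₀) ≤ dist (α t₀) (α' t₀) + dist (α' t₀) (α' s₀)
        + dist (α' s₀) (β' t₀) + dist (β' t₀) (β t₀) := by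
      calc dist (α t₀) (β t₀) ≤ dist (α t₀) (β' t₀) + dist (β' t₀) (β t₀) :=
            dist_triangle _ _ _
        _ ≤ (dist (α t₀) (α' s₀) + dist (α' s₀) (β' t₀)) + dist (β' t₀) (β t₀) := by
            have := dist_triangle (α t₀) (α' s₀) (β' t₀); linarith
        _ ≤ (dist (α t₀) (α' t₀) + dist (α' t₀) (α' s₀) + dist (α' s₀) (β' t₀))
            + dist (β' t₀) (β t₀) := by
            have := dist_triangle (α t₀) (α' t₀) (α' s₀); linarith
    have h2 : dist (α' s₀) (β' t₀) ≤ κ := by rw [hps, dist_comm]; exact hdp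
    have h3 : dist (β' t₀) (β t₀) ≤ D := by rw [dist_comm]; exact hββD t₀ ht₀0
    have h4 := hααD t₀ ht₀0
    rw [hα'seg] at h1
    have hM2 : 2 * M = D + κ + κ + D := by rw [hMdef]; ring
    rw [hM2]
    linarith
  -- rescale along the convex function dist (α t) (β t)
  set b := κ / (2 * M) with hbdef
  have hκpos : (0:ℝ) < κ := by linarith
  have hb0 : 0 < b := div_pos hκpos (by linarith)
  have hb1 : b ≤ 1 := by
    rw [hbdef, div_le_one (by linarith : (0:ℝ) < 2 * M)]
    linarith
  set t₁ := b * t₀ with ht₁def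
  have hMne : M ≠ 0 := ne_of_gt hMpos
  have h2Mne : 2 * M ≠ 0 := by positivity
  clear_value b t₁
  have ht₁0 : (0:ℝ) ≤ t₁ := by rw [ht₁def]; exact mul_nonneg hb0.le ht₀0
  have hkey := (hconv α β hα hβ).2 (mem_Ici.mpr le_rfl) (mem_Ici.mpr ht₀0)
    (sub_nonneg.mpr hb1) hb0.le (by ring)
  have hval : (1 - b) • (0:ℝ) + b • t₀ = t₁ := by
    simp [ht₁def, smul_eq_mul]
  rw [hval] at hkey
  simp only [smul_eq_mul] at hkey
  have h00 : dist (α 0) (β 0) = 0 := by rw [hα0, hβ0, dist_self]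
  rw [h00] at hkey
  have hg1 : dist (α t₁) (β t₁) ≤ κ := by
    have hb2M : b * (2 * M) = κ := by
      rw [hbdef]; field_simp
    have : b * dist (α t₀) (β t₀) ≤ b * (2 * M) :=
      mul_le_mul_of_nonneg_left hchain hb0.le
    rw [hb2M] at this
    linarith
  have ht₁R : R ≤ t₁ := by
    have h1 : 2 * M * R / 3 ≤ t₀ := by
      have : R' - κ = 2 * M * R / 3 := by rw [hR'def]; ring
      linarith
    have h2 : b * (2 * M * R / 3) ≤ b * t₀ := mul_le_mul_of_nonneg_left h1 hb0.le
    have h3 : b * (2 * M * R / 3) = κ * R / 3 := by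
      rw [hbdef]; field_simp
    have h4 : R ≤ κ * R / 3 := by nlinarith
    rw [h3] at h2
    rw [ht₁def]
    linarith
  refine ⟨t₁, ht₁0, ?_⟩
  have hmem : α t₁ ∈ (α '' Ici 0) \ ball o R := by
    refine ⟨⟨t₁, ht₁0, rfl⟩, ?_⟩
    simp only [mem_ball, not_lt]
    have : dist (α t₁) o = t₁ := by
      rw [← hα0, hα t₁ ht₁0 0 le_rfl, sub_zero, abs_of_nonneg ht₁0]
    rw [this]; exact ht₁R
  refine le_trans (infDist_le_dist_of_mem hmem) ?_
  rw [dist_comm]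
  exact hg1
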